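/- Let A be the abelianization of the group with generators a₁, b₁, a₂, b₂, c₁, d₁, c₂, d₂ and relations [b₁⁻¹, d₁⁻¹] = a₁, [a₁⁻¹, d₁] = b₁, [b₂⁻¹, d₂⁻¹] = a₂, [a₂⁻¹, d₂] = b₂, [d₁⁻¹, b₂⁻¹] = c₁, [c₁⁻¹, b₂] = d₁, [d₂⁻¹, b₁⁻¹] = c₂, [c₂⁻¹, b₁]^(n+1) = d₂ (for a fixed natural number n ≥ 1), together with [a₁, c₁] = 1, [a₁, c₂] = 1, [a₁, d₂] = 1, [b₁, c₁] = 1, [a₂, c₁] = 1, [a₂, c₂] = 1, [a₂, d₁] = 1, [b₂, c₂] = 1, [a₁, b₁][a₂, b₂] = 1, [c₁, d₁][c₂, d₂] = 1. Then A is the trivial group. -/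

import Mathlib

namespace Stmt4

open scoped commutatorElement

def a₁ : FreeGroup (Fin 8) := FreeGroup.of 0
def b₁ : FreeGroup (Fin 8) := FreeGroup.of 1
def a₂ : FreeGroup (Fin 8) := FreeGroup.of 2
def b₂ : FreeGroup (Fin 8) := FreeGroup.of 3
def c₁ : FreeGroup (Fin 8) := FreeGroup.of 4
def d₁ : FreeGroup (Fin 8) := FreeGroup.of 5
def c₂ : FreeGroup (Fin 8) := FreeGroup.of 6
def d₂ : FreeGroup (Fin 8) := FreeGroup.of 7

/-- Relators of the Section 4 presentation. -/
def rels (n : ℕ) : Set (FreeGroup (Fin 8)) :=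
  { ⁅b₁⁻¹, d₁⁻¹⁆ * a₁⁻¹,
    ⁅a₁⁻¹, d₁⁆ * b₁⁻¹,
    ⁅b₂⁻¹, d₂⁻¹⁆ * a₂⁻¹,
    ⁅a₂⁻¹, d₂⁆ * b₂⁻¹,
    ⁅d₁⁻¹, b₂⁻¹⁆ * c₁⁻¹,
    ⁅c₁⁻¹, b₂⁆ * d₁⁻¹,
    ⁅d₂⁻¹, b₁⁻¹⁆ * c₂⁻¹,
    ⁅c₂⁻¹, b₁⁆ ^ (n + 1) * d₂⁻¹,
    ⁅a₁, c₁⁆, ⁅a₁, c₂⁆, ⁅a₁, d₂⁆, ⁅b₁, c₁⁆,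
    ⁅a₂, c₁⁆, ⁅a₂, c₂⁆, ⁅a₂, d₁⁆, ⁅b₂, c₂⁆,
    ⁅a₁, b₁⁆ * ⁅a₂, b₂⁆, ⁅c₁, d₁⁆ * ⁅c₂, d₂⁆ }

/-- The abelianization of the presentation with `⁅c₂⁻¹, b₁⁆^(n+1) = d₂` is trivial. -/
theorem abelianization_trivial (n : ℕ) (hn : 1 ≤ n) :
    ∀ x : Abelianization (PresentedGroup (rels n)), x = 1 := by
  set f : FreeGroup (Fin 8) →* Abelianization (PresentedGroup (rels n)) :=
    Abelianization.of.comp (QuotientGroup.mk' (Subgroup.normalClosure (rels n))) with hf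
  -- f kills every relator
  have hrel : ∀ r ∈ rels n, f r = 1 := by
    intro r hr
    have : (QuotientGroup.mk' (Subgroup.normalClosure (rels n))) r = 1 := by
      rw [QuotientGroup.mk'_apply, QuotientGroup.eq_one_iff]
      exact Subgroup.subset_normalClosure hr
    exact (congrArg (Abelianization.of (G := PresentedGroup (rels n))) this).trans (map_one _)
  -- f kills every commutator
  have hcomm : ∀ x y : FreeGroup (Fin 8), f ⁅x, y⁆ = 1 := by
    intro x y
    rw [map_commutatorElement]
    exact commutatorElement_eq_one_iff_commute.mpr (mul_comm _ _)
  have key : ∀ x y g : FreeGroup (Fin 8), f (⁅x, y⁆ * g⁻¹) = 1 → f g = 1 := by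
    intro x y g h
    rw [map_mul, hcomm, one_mul, map_inv, inv_eq_one] at h
    exact h
  have ha₁ : f a₁ = 1 := key _ _ _ (hrel (⁅b₁⁻¹, d₁⁻¹⁆ * a₁⁻¹) (Set.mem_insert _ _))
  have hb₁ : f b₁ = 1 := key _ _ _ (hrel (⁅a₁⁻¹, d₁⁆ * b₁⁻¹) (Set.mem_insert_of_mem _ (Set.mem_insert _ _)))
  have ha₂ : f a₂ = 1 := key _ _ _ (hrel (⁅b₂⁻¹, d₂⁻¹⁆ * a₂⁻¹) (Set.mem_insert_of_mem _ (Set.mem_insert_of_mem _ (Set.mem_insert _ _))))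
  have hb₂ : f b₂ = 1 := key _ _ _ (hrel (⁅a₂⁻¹, d₂⁆ * b₂⁻¹) (Set.mem_insert_of_mem _ (Set.mem_insert_of_mem _ (Set.mem_insert_of_mem _ (Set.mem_insert _ _)))))
  have hc₁ : f c₁ = 1 := key _ _ _ (hrel (⁅d₁⁻¹, b₂⁻¹⁆ * c₁⁻¹) (Set.mem_insert_of_mem _ (Set.mem_insert_of_mem _ (Set.mem_insert_of_mem _ (Set.mem_insert_of_mem _ (Set.mem_insert _ _))))))
  have hd₁ : f d₁ = 1 := key _ _ _ (hrel (⁅c₁⁻¹, b₂⁆ * d₁⁻¹) (Set.mem_insert_of_mem _ (Set.mem_insert_of_mem _ (Set.mem_insert_of_mem _ (Set.mem_insert_of_mem _ (Set.mem_insert_of_mem _ (Set.mem_insert _ _)))))))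
  have hc₂ : f c₂ = 1 := key _ _ _ (hrel (⁅d₂⁻¹, b₁⁻¹⁆ * c₂⁻¹) (Set.mem_insert_of_mem _ (Set.mem_insert_of_mem _ (Set.mem_insert_of_mem _ (Set.mem_insert_of_mem _ (Set.mem_insert_of_mem _ (Set.mem_insert_of_mem _ (Set.mem_insert _ _))))))))
  have hd₂ : f d₂ = 1 := by
    have h := hrel (⁅c₂⁻¹, b₁⁆ ^ (n + 1) * d₂⁻¹) (Set.mem_insert_of_mem _ (Set.mem_insert_of_mem _ (Set.mem_insert_of_mem _ (Set.mem_insert_of_mem _ (Set.mem_insert_of_mem _ (Set.mem_insert_of_mem _ (Set.mem_insert_of_mem _ (Set.mem_insert _ _))))))))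
    rw [map_mul, map_pow, hcomm, one_pow, one_mul, map_inv, inv_eq_one] at h
    exact h
  have hgen : ∀ i : Fin 8, f (FreeGroup.of i) = 1 := by
    intro i
    fin_cases i
    exacts [ha₁, hb₁, ha₂, hb₂, hc₁, hd₁, hc₂, hd₂]
  have hfall : ∀ g : FreeGroup (Fin 8), f g = 1 := by
    have : f = 1 := FreeGroup.ext_hom f 1 (by simpa using hgen)
    intro g; rw [this]; rfl
  intro x
  refine QuotientGroup.induction_on x fun y => ?_
  exact QuotientGroup.induction_on y fun g => hfall g

end Stmt4
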